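/- Let α ∈ (0,1/2), let W₀ have density (α/(1-α))·u^{α/(1-α)-1} on (0,1), let (Pᵢ)_{i≥1} be i.i.d. with Pᵢ = 1 with probability α and Pᵢ = Uᵢ^{(1-α)/α} with probability 1-α (Uᵢ uniform on [0,1]), all independent of W₀, and set W_k = W₀·∏_{i=1}^k Pᵢ. Then E[W_k] = α·(α(2-α))^k and E[W_k^{(1-2α)/(1-α)}] = (α/(1-α))·(2α)^k for every k ≥ 0. -/

import Mathlib

open MeasureTheory ProbabilityTheory

/-- Law of the multiplicative step `Pᵢ`: equal to `1` with probability `α` and to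
`U^((1-α)/α)` with probability `1-α`, `U` uniform on `[0,1]`. -/
noncomputable def mixtureLaw (α : ℝ) : Measure ℝ :=
  ENNReal.ofReal α • Measure.dirac 1 +
    ENNReal.ofReal (1 - α) •
      Measure.map (fun u : ℝ => u ^ ((1 - α) / α)) (volume.restrict (Set.Icc (0 : ℝ) 1))

/-- Law of `W₀`: density `(α/(1-α)) u^(α/(1-α)-1)` on `(0,1)`. -/
noncomputable def initialLaw (α : ℝ) : Measure ℝ :=
  (volume.restrict (Set.Ioo (0 : ℝ) 1)).withDensity
    (fun u => ENNReal.ofReal (α / (1 - α) * u ^ (α / (1 - α) - 1)))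

lemma initial_moment {α : ℝ} (hα : α ∈ Set.Ioo (0 : ℝ) (1 / 2)) {p : ℝ} (hp : 0 ≤ p) :
    ∫ x, x ^ p ∂(initialLaw α) = (α / (1 - α)) / (α / (1 - α) + p) := by
  obtain ⟨h0, h2⟩ := hα
  have h1' : (0 : ℝ) < 1 - α := by linarith
  set c : ℝ := α / (1 - α) with hc
  have hcpos : 0 < c := div_pos h0 h1'
  have hdm : Measurable fun u : ℝ => (c * u ^ (c - 1)).toNNReal :=
    (measurable_const.mul (measurable_id.pow_const (c - 1))).real_toNNReal
  have hrepr : initialLaw α =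
      (volume.restrict (Set.Ioo (0 : ℝ) 1)).withDensity
        (fun u => ((c * u ^ (c - 1)).toNNReal : ENNReal)) := rfl
  rw [hrepr, integral_withDensity_eq_integral_smul hdm]
  have heq : Set.EqOn (fun x : ℝ => (c * x ^ (c - 1)).toNNReal • x ^ p)
      (fun x : ℝ => c * x ^ (c - 1 + p)) (Set.Ioo 0 1) := by
    intro x hx
    have hxpos : 0 < x := hx.1
    have hd : 0 ≤ c * x ^ (c - 1) := mul_nonneg hcpos.le (Real.rpow_nonneg hxpos.le _)
    simp only [NNReal.smul_def, Real.coe_toNNReal _ hd]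
    rw [smul_eq_mul, Real.rpow_add hxpos, mul_assoc]
  rw [setIntegral_congr_fun measurableSet_Ioo heq, integral_const_mul,
    ← integral_Ioc_eq_integral_Ioo, ← intervalIntegral.integral_of_le zero_le_one,
    integral_rpow (Or.inl (by linarith : (-1 : ℝ) < c - 1 + p))]
  have hcp : c - 1 + p + 1 = c + p := by ring
  rw [hcp, Real.one_rpow, Real.zero_rpow (by linarith : (0:ℝ) < c + p).ne']
  ring

lemma mixture_moment {α : ℝ} (hα : α ∈ Set.Ioo (0 : ℝ) (1 / 2)) {p : ℝ} (hp : 0 ≤ p) :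
    ∫ x, x ^ p ∂(mixtureLaw α) = α + (1 - α) / ((1 - α) / α * p + 1) := by
  obtain ⟨h0, h2⟩ := hα
  have h1' : (0 : ℝ) < 1 - α := by linarith
  set e : ℝ := (1 - α) / α with he
  have hepos : 0 < e := div_pos h1' h0
  have hmape : Measurable fun u : ℝ => u ^ e := measurable_id.pow_const e
  have hgm : Measurable fun x : ℝ => x ^ p := measurable_id.pow_const p
  have hInt1 : Integrable (fun x : ℝ => x ^ p) (Measure.dirac 1) :=
    (integrable_const (((1 : ℝ)) ^ p)).congr (ae_eq_dirac fun x : ℝ => x ^ p).symm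
  have hInt2 : Integrable (fun x : ℝ => x ^ p)
      (Measure.map (fun u : ℝ => u ^ e) (volume.restrict (Set.Icc (0 : ℝ) 1))) := by
    rw [integrable_map_measure hgm.aestronglyMeasurable hmape.aemeasurable]
    refine (integrable_const (1 : ℝ)).mono'
      ((hmape.pow_const p).aestronglyMeasurable) ?_
    rw [ae_restrict_iff' measurableSet_Icc]
    refine Filter.Eventually.of_forall fun u hu => ?_
    have h0u : 0 ≤ u ^ e := Real.rpow_nonneg hu.1 _
    have h1u : u ^ e ≤ 1 := Real.rpow_le_one hu.1 hu.2 hepos.le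
    have h2u : 0 ≤ (u ^ e) ^ p := Real.rpow_nonneg h0u _
    simp only [Function.comp_apply, Real.norm_eq_abs]
    rw [abs_of_nonneg h2u]
    exact Real.rpow_le_one h0u h1u hp
  rw [mixtureLaw, integral_add_measure (hInt1.smul_measure ENNReal.ofReal_ne_top)
      (hInt2.smul_measure ENNReal.ofReal_ne_top), integral_smul_measure,
    integral_smul_measure, integral_dirac, integral_map hmape.aemeasurable
      hgm.aestronglyMeasurable, ENNReal.toReal_ofReal h0.le,
    ENNReal.toReal_ofReal h1'.le, Real.one_rpow]
  have heq : Set.EqOn (fun u : ℝ => (u ^ e) ^ p) (fun u : ℝ => u ^ (e * p))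
      (Set.Icc 0 1) := fun u hu => (Real.rpow_mul hu.1 e p).symm
  rw [setIntegral_congr_fun measurableSet_Icc heq, integral_Icc_eq_integral_Ioc,
    ← intervalIntegral.integral_of_le zero_le_one,
    integral_rpow (Or.inl (by nlinarith [mul_nonneg hepos.le hp] : (-1 : ℝ) < e * p))]
  rw [Real.one_rpow, Real.zero_rpow (by nlinarith [mul_nonneg hepos.le hp] : (0:ℝ) < e * p + 1).ne']
  simp only [smul_eq_mul]
  ring

theorem stmt_11 {Ω : Type*} [MeasurableSpace Ω] (P : Measure Ω) [IsProbabilityMeasure P]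
    (α : ℝ) (hα : α ∈ Set.Ioo (0 : ℝ) (1 / 2))
    (f : ℕ → Ω → ℝ) (hmeas : ∀ i, Measurable (f i))
    (hindep : iIndepFun f P)
    (hW₀ : Measure.map (f 0) P = initialLaw α)
    (hP : ∀ i : ℕ, Measure.map (f (i + 1)) P = mixtureLaw α)
    (k : ℕ) :
    (∫ ω, ∏ i ∈ Finset.range (k + 1), f i ω ∂P) = α * (α * (2 - α)) ^ k ∧
    (∫ ω, (∏ i ∈ Finset.range (k + 1), f i ω) ^ ((1 - 2 * α) / (1 - α)) ∂P) =
      α / (1 - α) * (2 * α) ^ k := by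
  obtain ⟨h0, h2⟩ := hα
  have h1' : (0 : ℝ) < 1 - α := by linarith
  have hane : α ≠ 0 := h0.ne'
  have h1ne : (1 : ℝ) - α ≠ 0 := h1'.ne'
  set β : ℝ := (1 - 2 * α) / (1 - α) with hβ
  have hβpos : 0 < β := div_pos (by linarith) h1'
  -- a.e. nonnegativity of each variable
  have hnn : ∀ i, ∀ᵐ ω ∂P, 0 ≤ f i ω := by
    intro i
    have hpre : P (f i ⁻¹' Set.Iio 0) = 0 := by
      rw [← Measure.map_apply (hmeas i) (measurableSet_Iio (a := (0 : ℝ)))]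
      cases i with
      | zero =>
        rw [hW₀, initialLaw, withDensity_apply _ measurableSet_Iio,
          Measure.restrict_restrict measurableSet_Iio]
        have hempty : Set.Iio (0 : ℝ) ∩ Set.Ioo 0 1 = ∅ := by
          ext x
          simp only [Set.mem_inter_iff, Set.mem_Iio, Set.mem_Ioo, Set.mem_empty_iff_false,
            iff_false, not_and]
          intro hx hx'
          linarith
        rw [hempty, Measure.restrict_empty, lintegral_zero_measure]
      | succ n =>
        rw [hP n, mixtureLaw]
        have hmape : Measurable fun u : ℝ => u ^ ((1 - α) / α) :=
          measurable_id.pow_const _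
        rw [Measure.add_apply, Measure.smul_apply, Measure.smul_apply,
          Measure.map_apply hmape measurableSet_Iio]
        have hd : Measure.dirac (1 : ℝ) (Set.Iio 0) = 0 := by
          rw [Measure.dirac_apply' _ measurableSet_Iio]
          simp
        have hv : (volume.restrict (Set.Icc (0 : ℝ) 1))
            ((fun u : ℝ => u ^ ((1 - α) / α)) ⁻¹' Set.Iio 0) = 0 := by
          rw [Measure.restrict_apply' measurableSet_Icc]
          have : (fun u : ℝ => u ^ ((1 - α) / α)) ⁻¹' Set.Iio 0 ∩ Set.Icc 0 1 = ∅ := by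
            ext u
            simp only [Set.mem_inter_iff, Set.mem_preimage, Set.mem_Iio, Set.mem_Icc,
              Set.mem_empty_iff_false, iff_false, not_and]
            intro hu hu'
            exact absurd hu (not_lt.2 (Real.rpow_nonneg hu' _))
          rw [this]
          simp
        rw [hd, hv]
        simp
    rw [ae_iff]
    simp only [not_le]
    exact hpre
  -- moments
  have mi1 : ∫ x, x ∂(initialLaw α) = (α / (1 - α)) / (α / (1 - α) + 1) := by
    have := initial_moment ⟨h0, h2⟩ (zero_le_one (α := ℝ))
    simpa [Real.rpow_one] using this
  have miβ : ∫ x, x ^ β ∂(initialLaw α) = (α / (1 - α)) / (α / (1 - α) + β) :=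
    initial_moment ⟨h0, h2⟩ hβpos.le
  have mm1 : ∫ x, x ∂(mixtureLaw α) = α + (1 - α) / ((1 - α) / α * 1 + 1) := by
    have := mixture_moment ⟨h0, h2⟩ (zero_le_one (α := ℝ))
    simpa [Real.rpow_one] using this
  have mmβ : ∫ x, x ^ β ∂(mixtureLaw α) = α + (1 - α) / ((1 - α) / α * β + 1) :=
    mixture_moment ⟨h0, h2⟩ hβpos.le
  -- numerical identities
  have v1 : (α / (1 - α)) / (α / (1 - α) + 1) = α := by
    rw [show α / (1 - α) + 1 = 1 / (1 - α) by field_simp; ring]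
    field_simp
  have v2 : (α / (1 - α)) / (α / (1 - α) + β) = α / (1 - α) := by
    have : α / (1 - α) + β = 1 := by
      rw [hβ, ← add_div, div_eq_one_iff_eq h1'.ne']
      ring
    rw [this, div_one]
  have v3 : α + (1 - α) / ((1 - α) / α * 1 + 1) = α * (2 - α) := by
    field_simp
    ring
  have v4 : α + (1 - α) / ((1 - α) / α * β + 1) = 2 * α := by
    have hb : (1 - α) / α * β + 1 = (1 - α) / α := by
      rw [hβ]
      field_simp
      ring
    rw [hb, div_div_eq_mul_div, mul_comm, mul_div_assoc, div_self h1'.ne', mul_one]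
    ring
  -- expectations of individual variables in Ω
  have E0 : ∫ ω, f 0 ω ∂P = α := by
    rw [← v1, ← mi1, ← hW₀]
    exact (integral_map (hmeas 0).aemeasurable aestronglyMeasurable_id).symm
  have E0β : ∫ ω, f 0 ω ^ β ∂P = α / (1 - α) := by
    rw [← v2, ← miβ, ← hW₀]
    exact (integral_map (hmeas 0).aemeasurable
      (measurable_id.pow_const β).aestronglyMeasurable).symm
  have Ei : ∀ i : ℕ, ∫ ω, f (i + 1) ω ∂P = α * (2 - α) := by
    intro i
    rw [← v3, ← mm1, ← hP i]
    exact (integral_map (hmeas _).aemeasurable aestronglyMeasurable_id).symm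
  have Eiβ : ∀ i : ℕ, ∫ ω, f (i + 1) ω ^ β ∂P = 2 * α := by
    intro i
    rw [← v4, ← mmβ, ← hP i]
    exact (integral_map (hmeas _).aemeasurable
      (measurable_id.pow_const β).aestronglyMeasurable).symm
  -- main induction
  induction k with
  | zero =>
    constructor
    · simpa [Finset.prod_range_one] using E0
    · simpa [Finset.prod_range_one] using E0β
  | succ k ih =>
    obtain ⟨ih1, ih2⟩ := ih
    have hSmeas : Measurable fun ω => ∏ i ∈ Finset.range (k + 1), f i ω :=
      Finset.measurable_prod _ fun i _ => hmeas i
    have hIndep : IndepFun (fun ω => ∏ i ∈ Finset.range (k + 1), f i ω) (f (k + 1)) P := by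
      have h := hindep.indepFun_finsetProd_of_notMem hmeas
        (Finset.notMem_range_self (n := k + 1))
      have hfun : (∏ j ∈ Finset.range (k + 1), f j) =
          fun ω => ∏ i ∈ Finset.range (k + 1), f i ω := by
        ext ω
        exact Finset.prod_apply ω (Finset.range (k + 1)) f
      rwa [hfun] at h
    constructor
    · have hstep : (fun ω => ∏ i ∈ Finset.range (k + 1 + 1), f i ω) =
          fun ω => (∏ i ∈ Finset.range (k + 1), f i ω) * f (k + 1) ω :=
        funext fun ω => Finset.prod_range_succ _ _
      rw [hstep, hIndep.integral_fun_mul_eq_mul_integral hSmeas.aestronglyMeasurable (hmeas _).aestronglyMeasurable,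
        ih1, Ei k]
      ring
    · have hae : ∀ᵐ ω ∂P, ((∏ i ∈ Finset.range (k + 1), f i ω) * f (k + 1) ω) ^ β =
          (∏ i ∈ Finset.range (k + 1), f i ω) ^ β * f (k + 1) ω ^ β := by
        filter_upwards [ae_all_iff.mpr hnn] with ω hω
        exact Real.mul_rpow (Finset.prod_nonneg fun i _ => hω i) (hω (k + 1))
      have hIndepβ : IndepFun (fun ω => (∏ i ∈ Finset.range (k + 1), f i ω) ^ β)
          (fun ω => f (k + 1) ω ^ β) P :=
        hIndep.comp (measurable_id.pow_const β) (measurable_id.pow_const β)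
      have hstepβ : (fun ω => (∏ i ∈ Finset.range (k + 1 + 1), f i ω) ^ β) =
          fun ω => ((∏ i ∈ Finset.range (k + 1), f i ω) * f (k + 1) ω) ^ β :=
        funext fun ω => by rw [Finset.prod_range_succ]
      rw [hstepβ, integral_congr_ae hae,
        hIndepβ.integral_fun_mul_eq_mul_integral (hSmeas.pow_const β).aestronglyMeasurable
          ((hmeas _).pow_const β).aestronglyMeasurable, ih2, Eiβ k]
      ring
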